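/- arXiv:math/0305406 — 2 statements merged into one kernel-verified Lean document; each statement's English description precedes it below -/
import Mathlib

section
/- Let F ⊆ Q̄ be closed under the given involution, p(t) an irreducible polynomial over F with p̄(t) = u·p(t) for a unit u in F[t, t⁻¹], and let α ∈ S¹ be a root of ρ(p) for an embedding ρ : F → Q̄ preserving the involution. Let (V, θ) be a nonsingular hermitian form over F_p = F[t,t⁻¹]/(p(t)). Then the signature of the hermitian form on V ⊗_{F_p} Q̄ obtained by extending scalars via the embedding ρ_α : F_p → Q̄, t ↦ α, equals the signature of the restriction to Ker(t − α) ⊆ V ⊗_F Q̄ of the form tr_{Q̄_p/Q̄} ∘ (θ ⊗_F Q̄). In other words, the two ways of localizing a hermitian form over F_p at the place (ρ, α) yield isometric hermitian forms over Q̄. -/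
set_option synthInstance.maxHeartbeats 1000000

open Complex

namespace Stmt4

/-- The index (dimension of a maximal subspace contained in `W` on which the
form `τ` is positive definite). -/
noncomputable def posIdxOn (V : Type*) [AddCommGroup V] [Module ℂ V]
    (W : Set V) (τ : V → V → ℂ) : ℕ :=
  sSup {d : ℕ | ∃ U : Submodule ℂ V, (U : Set V) ⊆ W ∧
    Module.finrank ℂ U = d ∧ ∀ v ∈ U, v ≠ 0 → 0 < (τ v v).re}

/-- The index of a maximal negative definite subspace contained in `W`. -/
noncomputable def negIdxOn (V : Type*) [AddCommGroup V] [Module ℂ V]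
    (W : Set V) (τ : V → V → ℂ) : ℕ :=
  sSup {d : ℕ | ∃ U : Submodule ℂ V, (U : Set V) ⊆ W ∧
    Module.finrank ℂ U = d ∧ ∀ v ∈ U, v ≠ 0 → (τ v v).re < 0}

/-- The signature of the form `τ` restricted to `W`. -/
noncomputable def signOn (V : Type*) [AddCommGroup V] [Module ℂ V]
    (W : Set V) (τ : V → V → ℂ) : ℤ :=
  (posIdxOn V W τ : ℤ) - (negIdxOn V W τ : ℤ)

end Stmt4

set_option maxHeartbeats 1000000

namespace Stmt4Aux

lemma idx_subset {V₁ V₂ : Type*} [AddCommGroup V₁] [Module ℂ V₁]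
    [AddCommGroup V₂] [Module ℂ V₂]
    (W₁ : Set V₁) (W₂ : Set V₂) (τ₁ : V₁ → V₁ → ℂ) (τ₂ : V₂ → V₂ → ℂ) (P : ℝ → Prop)
    (f : V₁ →ₗ[ℂ] V₂) (hfW : ∀ v ∈ W₁, f v ∈ W₂)
    (hf0 : ∀ v ∈ W₁, f v = 0 → v = 0)
    (hτ : ∀ v ∈ W₁, ∀ w ∈ W₁, τ₂ (f v) (f w) = τ₁ v w) :
    {d : ℕ | ∃ U : Submodule ℂ V₁, (U : Set V₁) ⊆ W₁ ∧ Module.finrank ℂ U = d ∧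
        ∀ v ∈ U, v ≠ 0 → P (τ₁ v v).re}
    ⊆ {d : ℕ | ∃ U : Submodule ℂ V₂, (U : Set V₂) ⊆ W₂ ∧ Module.finrank ℂ U = d ∧
        ∀ v ∈ U, v ≠ 0 → P (τ₂ v v).re} := by
  rintro d ⟨U, hUW, hUd, hUpos⟩
  refine ⟨U.map f, ?_, ?_, ?_⟩
  · rintro x ⟨u, hu, rfl⟩
    exact hfW u (hUW hu)
  · rw [← hUd]
    have hinj : Function.Injective (f.comp U.subtype) := by
      intro a b hab
      have h1 : f ((a : V₁) - (b : V₁)) = 0 := by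
        simpa [map_sub, sub_eq_zero] using hab
      have h2 : ((a : V₁) - (b : V₁)) ∈ U := U.sub_mem a.2 b.2
      have h3 := hf0 _ (hUW h2) h1
      exact Subtype.ext (by linear_combination (norm := module) h3)
    have hr : U.map f = LinearMap.range (f.comp U.subtype) := by
      rw [LinearMap.range_comp, Submodule.range_subtype]
    rw [hr, LinearMap.finrank_range_of_inj hinj]
  · rintro x ⟨u, hu, rfl⟩ hx0
    rw [hτ u (hUW hu) u (hUW hu)]
    exact hUpos u hu (fun h => hx0 (by rw [h, map_zero]))

end Stmt4Aux

open Stmt4 in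
/-- Let `F ⊆ ℂ` be Galois over `ℚ` and closed under complex conjugation, `p`
an irreducible (monic) polynomial over `F` carrying an involution `ι` of
`F_p = F[t,t⁻¹]/(p(t))` with `ā` on coefficients and `t̄ = t⁻¹` (which encodes
`p̄ = u·p`), let `ρ : F → Q̄ ⊆ ℂ` be an involution-preserving embedding and
`α ∈ S¹` a root of `ρ(p)`.  Let `(V, θ)` be a nonsingular hermitian form over
`F_p`, given by a hermitian matrix `θ` with `det θ ≠ 0`.  Then the signature of
the hermitian form on `V ⊗_{F_p} Q̄` obtained by extending scalars along
`ρ_α : F_p → Q̄`, `t ↦ α`, equals the signature of the restriction to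
`Ker(t - α) ⊆ V ⊗_F Q̄` of the trace form `tr_{Q̄_p/Q̄} ∘ (θ ⊗_F Q̄)`
(where `Q̄_p = Q̄[t]/(ρ(p))`, with `φ : F_p → Q̄_p` the base-change map and
`bar` the induced involution of `Q̄_p`): the two localizations of a hermitian
form over `F_p` at the place `(ρ, α)` have the same signature. -/
theorem statement4 (F : Subfield ℂ) [IsGalois ℚ F]
    (hF : ∀ x : ℂ, x ∈ F → (starRingEnd ℂ) x ∈ F)
    (p : Polynomial F) [Fact (Irreducible p)] (hmonic : p.Monic)
    -- the involution of F_p = F[t]/(p)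
    (ι : AdjoinRoot p →+* AdjoinRoot p) (hι2 : ∀ x, ι (ι x) = x)
    (hιC : ∀ a : F, ι (AdjoinRoot.of p a)
      = AdjoinRoot.of p ⟨(starRingEnd ℂ) (a : ℂ), hF _ a.2⟩)
    (hιt : ι (AdjoinRoot.root p) * AdjoinRoot.root p = 1)
    -- the embedding ρ : F → Q̄ ⊆ ℂ, preserving the involution
    (ρ : F →+* ℂ)
    (hρ : ∀ x : F, ρ ⟨(starRingEnd ℂ) (x : ℂ), hF _ x.2⟩ = (starRingEnd ℂ) (ρ x))
    -- α ∈ S¹ a root of ρ(p)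
    (α : ℂ) (hαcirc : ‖α‖ = 1) (hα : Polynomial.eval₂ ρ α p = 0)
    -- the hermitian form (V, θ) over F_p, V = (F_p)ⁿ
    (n : ℕ) (θ : Matrix (Fin n) (Fin n) (AdjoinRoot p))
    (hherm : ∀ i j, θ i j = ι (θ j i)) (hns : θ.det ≠ 0)
    -- the base change map φ : F_p → Q̄_p = Q̄[t]/(ρ(p)) induced by ρ
    (φ : AdjoinRoot p →+* AdjoinRoot (p.map ρ))
    (hφC : ∀ a : F, φ (AdjoinRoot.of p a) = AdjoinRoot.of (p.map ρ) (ρ a))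
    (hφt : φ (AdjoinRoot.root p) = AdjoinRoot.root (p.map ρ))
    -- the involution of Q̄_p induced by ι and complex conjugation
    (bar : AdjoinRoot (p.map ρ) →+* AdjoinRoot (p.map ρ))
    (hbarC : ∀ z : ℂ, bar (AdjoinRoot.of (p.map ρ) z)
      = AdjoinRoot.of (p.map ρ) ((starRingEnd ℂ) z))
    (hbart : bar (AdjoinRoot.root (p.map ρ)) = φ (ι (AdjoinRoot.root p))) :
    -- the signature of θ pushed forward along ρ_α : F_p → ℂ, t ↦ α ...
    signOn (Fin n → ℂ) Set.univ
      (fun v w => ∑ i, ∑ j,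
        (starRingEnd ℂ) (v i) * (AdjoinRoot.lift ρ α hα) (θ i j) * w j)
    -- ... equals the signature of the trace form restricted to Ker(t - α)
    = signOn (Fin n → AdjoinRoot (p.map ρ))
        {v | ∀ k, (AdjoinRoot.root (p.map ρ) - AdjoinRoot.of (p.map ρ) α) * v k = 0}
        (fun v w => ∑ k, ∑ l,
          Algebra.trace ℂ (AdjoinRoot (p.map ρ)) (bar (v k) * φ (θ k l) * w l)) := by
  classical
  -- abbreviations
  set A := AdjoinRoot (p.map ρ) with hAdef
  set rt : A := AdjoinRoot.root (p.map ρ) with hrtdef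
  set O : ℂ →+* A := AdjoinRoot.of (p.map ρ) with hOdef
  -- basic facts about α
  have hα0 : α ≠ 0 := by
    intro h; rw [h] at hαcirc; simp at hαcirc
  have hconj : (starRingEnd ℂ) α * α = 1 := by
    rw [mul_comm, Complex.mul_conj]
    norm_cast
    rw [← Complex.sq_norm, hαcirc, one_pow]
  have hpρm : (p.map ρ).Monic := hmonic.map ρ
  have hpρ0 : p.map ρ ≠ 0 := hpρm.ne_zero
  have heval : (p.map ρ).eval α = 0 := by rw [Polynomial.eval_map]; exact hα
  have hEα : (p.map ρ).eval₂ (RingHom.id ℂ) α = 0 := heval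
  -- the evaluation map E : A → ℂ, t ↦ α
  set E : A →+* ℂ := AdjoinRoot.lift (RingHom.id ℂ) α hEα with hEdef
  have hEof : ∀ z : ℂ, E (O z) = z := fun z => AdjoinRoot.lift_of hEα
  have hEmk : ∀ g : Polynomial ℂ, E (AdjoinRoot.mk (p.map ρ) g) = g.eval α := fun g => by
    rw [hEdef, AdjoinRoot.lift_mk]; rfl
  have hEroot : E rt = α := AdjoinRoot.lift_root hEα
  have hsmul : ∀ (c : ℂ) (x : A), c • x = O c * x := fun c x => by
    rw [hOdef, ← AdjoinRoot.algebraMap_eq, Algebra.smul_def]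
  have hElin : ∀ (c : ℂ) (x : A), E (c • x) = c * E x := fun c x => by
    rw [hsmul, map_mul, hEof]
  -- mk as eval₂
  have hmkC : ∀ g : Polynomial ℂ, AdjoinRoot.mk (p.map ρ) g = g.eval₂ O rt := fun g => by
    rw [← AdjoinRoot.aeval_eq, Polynomial.aeval_def, AdjoinRoot.algebraMap_eq]
  have hmkF : ∀ g : Polynomial F, AdjoinRoot.mk p g
      = g.eval₂ (AdjoinRoot.of p) (AdjoinRoot.root p) := fun g => by
    rw [← AdjoinRoot.aeval_eq, Polynomial.aeval_def, AdjoinRoot.algebraMap_eq]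
  -- E ∘ φ = lift ρ α
  have hEφ : ∀ x, E (φ x) = AdjoinRoot.lift ρ α hα x := by
    intro x
    induction x using AdjoinRoot.induction_on with
    | ih g =>
      rw [AdjoinRoot.lift_mk, hmkF g, Polynomial.hom_eval₂, Polynomial.hom_eval₂]
      have h1 : (E.comp (φ.comp (AdjoinRoot.of p))) = ρ := by
        ext a
        simp only [RingHom.comp_apply, hφC]
        exact hEof (ρ a)
      rw [h1, hφt, hEroot]
  -- E ∘ bar = conj ∘ E
  have hβ : E (φ (ι (AdjoinRoot.root p))) = (starRingEnd ℂ) α := by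
    have h1 : E (φ (ι (AdjoinRoot.root p))) * α = 1 := by
      have h2 := congrArg (fun z => E (φ z)) hιt
      simpa only [map_mul, map_one, hφt, hEroot] using h2
    have h3 : (starRingEnd ℂ) α = α⁻¹ := eq_inv_of_mul_eq_one_left hconj
    rw [h3]
    exact eq_inv_of_mul_eq_one_left h1
  have hEbar : ∀ z, E (bar z) = (starRingEnd ℂ) (E z) := by
    intro z
    induction z using AdjoinRoot.induction_on with
    | ih g =>
      rw [hmkC g, Polynomial.hom_eval₂, Polynomial.hom_eval₂, Polynomial.hom_eval₂,
        Polynomial.hom_eval₂]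
      have h1 : (E.comp (bar.comp O)) = ((starRingEnd ℂ).comp (E.comp O)) := by
        ext c
        simp only [RingHom.comp_apply, hbarC]
        rw [hEof, hEof]
      rw [h1, hbart, hβ, hEroot]
  -- multiplication on the annihilator of (t - α)
  have hmul_ann : ∀ (m x : A), (rt - O α) * x = 0 → m * x = O (E m) * x := by
    intro m x hx
    induction m using AdjoinRoot.induction_on with
    | ih g =>
      obtain ⟨h, hg⟩ := Polynomial.X_sub_C_dvd_sub_C_eval (p := g) (a := α)
      have h2 : AdjoinRoot.mk (p.map ρ) g - O (g.eval α)
          = (rt - O α) * AdjoinRoot.mk (p.map ρ) h := by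
        have h3 := congrArg (AdjoinRoot.mk (p.map ρ)) hg
        simpa only [map_sub, map_mul, AdjoinRoot.mk_C, AdjoinRoot.mk_X] using h3
      have h4 : (AdjoinRoot.mk (p.map ρ) g - O (g.eval α)) * x = 0 := by
        rw [h2, mul_right_comm, hx, zero_mul]
      rw [sub_mul, sub_eq_zero] at h4
      rw [hEmk g]
      exact h4
  -- the polynomial q with (X - α) q = p^ρ
  have hpfac : (Polynomial.X - Polynomial.C α) * ((p.map ρ) / (Polynomial.X - Polynomial.C α))
      = p.map ρ := Polynomial.mul_div_eq_iff_isRoot.mpr heval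
  set q : Polynomial ℂ := (p.map ρ) / (Polynomial.X - Polynomial.C α) with hqdef
  have hQann : (rt - O α) * AdjoinRoot.mk (p.map ρ) q = 0 := by
    have h1 : rt - O α = AdjoinRoot.mk (p.map ρ) (Polynomial.X - Polynomial.C α) := by
      rw [map_sub, AdjoinRoot.mk_X, AdjoinRoot.mk_C]
    rw [h1, ← map_mul, hpfac, AdjoinRoot.mk_self]
  -- separability : q(α) ≠ 0
  haveI : CharZero F := by
    refine ⟨fun a b hab => ?_⟩
    have := congrArg (Subfield.subtype F) hab
    simpa using this
  have hsep : (p.map ρ).Separable := ((Fact.out : Irreducible p).separable).map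
  have hq0 : q.eval α ≠ 0 := by
    intro h0
    have hd : (p.map ρ).derivative.eval α = 0 := by
      conv_lhs => rw [← hpfac]
      rw [Polynomial.derivative_mul, Polynomial.derivative_X_sub_C]
      simp [h0]
    obtain ⟨a, b, hab⟩ := hsep
    have hd' : Polynomial.eval α (Polynomial.map ρ (Polynomial.derivative p)) = 0 := by
      rw [← Polynomial.derivative_map]; exact hd
    have h5 := congrArg (Polynomial.eval α) hab
    simp [heval, hd, hd'] at h5
  have hQ : E (AdjoinRoot.mk (p.map ρ) q) = q.eval α := hEmk q
  -- the idempotent e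
  set e : A := (q.eval α)⁻¹ • AdjoinRoot.mk (p.map ρ) q with hedef
  have heann : (rt - O α) * e = 0 := by
    rw [hedef, mul_smul_comm, hQann, smul_zero]
  have hscal : ∀ c : ℂ, c • AdjoinRoot.mk (p.map ρ) q = (c * q.eval α) • e := by
    intro c
    rw [hedef, smul_smul]
    congr 1
    field_simp
  have hEe : E e = 1 := by
    rw [hedef, hElin, hQ, inv_mul_cancel₀ hq0]
  have he0 : e ≠ 0 := fun h => one_ne_zero (by rw [← hEe, h, map_zero])
  -- every element of the annihilator is a multiple of e
  have hann_eq : ∀ x : A, (rt - O α) * x = 0 → x = E x • e := by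
    intro x hx
    induction x using AdjoinRoot.induction_on with
    | ih g =>
      have h1 : AdjoinRoot.mk (p.map ρ) ((Polynomial.X - Polynomial.C α) * g) = 0 := by
        rw [map_mul, map_sub, AdjoinRoot.mk_X, AdjoinRoot.mk_C]
        exact hx
      have hdvd : (Polynomial.X - Polynomial.C α) * q
          ∣ (Polynomial.X - Polynomial.C α) * g := by
        rw [hpfac]
        exact AdjoinRoot.mk_eq_zero.mp h1
      have hdvd2 : q ∣ g :=
        (mul_dvd_mul_iff_left (Polynomial.X_sub_C_ne_zero α)).mp hdvd
      obtain ⟨h, rfl⟩ := hdvd2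
      have h2 : AdjoinRoot.mk (p.map ρ) (q * h)
          = AdjoinRoot.mk (p.map ρ) h * AdjoinRoot.mk (p.map ρ) q := by
        rw [map_mul, mul_comm]
      rw [h2, hmul_ann _ _ hQann]
      rw [← hsmul, hElin, hQ, hscal]
  -- finite dimensionality
  haveI : Module.Finite ℂ A := (AdjoinRoot.powerBasis hpρ0).finite
  -- trace of e is 1
  have hproj : LinearMap.IsProj (Submodule.span ℂ {e}) (LinearMap.mul ℂ A e) := by
    constructor
    · intro x
      have h1 : e * x = E x • e := by
        have h2 := hmul_ann x e heann
        rw [mul_comm] at h2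
        rw [h2, ← hsmul]
      show e * x ∈ _
      rw [h1]
      exact Submodule.smul_mem _ _ (Submodule.mem_span_singleton_self e)
    · intro x hx
      obtain ⟨c, rfl⟩ := Submodule.mem_span_singleton.mp hx
      show e * (c • e) = c • e
      have h3 : e * e = e := by
        have h4 := hmul_ann e e heann
        rw [h4, ← hsmul, hEe, one_smul]
      rw [mul_smul_comm, h3]
  have htr_e : Algebra.trace ℂ A e = 1 := by
    have h1 := hproj.trace
    rw [finrank_span_singleton he0] at h1
    rw [Algebra.trace_apply]
    simpa using h1
  have htr_ann : ∀ x : A, (rt - O α) * x = 0 → Algebra.trace ℂ A x = E x := by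
    intro x hx
    conv_lhs => rw [hann_eq x hx]
    rw [map_smul, htr_e, smul_eq_mul, mul_one]
  -- key trace formula
  have hOc : O ((starRingEnd ℂ) α) * O α = 1 := by
    rw [← map_mul, hconj, map_one]
  have hkey : ∀ x y m : A, (rt - O α) * x = 0 → (rt - O α) * y = 0 →
      Algebra.trace ℂ A (bar x * m * y)
        = (starRingEnd ℂ) (E x) * E m * E y := by
    intro x y m hx hy
    have hbx : (rt - O α) * bar x = 0 := by
      have h1 : (φ (ι (AdjoinRoot.root p)) - O ((starRingEnd ℂ) α)) * bar x = 0 := by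
        have h2 := congrArg bar hx
        simp only [map_mul, map_sub, map_zero, hbart, hOdef] at h2
        erw [hbarC] at h2
        exact h2
      have hinv : φ (ι (AdjoinRoot.root p)) * rt = 1 := by
        have h3 := congrArg φ hιt
        simpa only [map_mul, map_one, hφt] using h3
      have h2 : (1 - O ((starRingEnd ℂ) α) * rt) * bar x = 0 := by
        linear_combination rt * h1 - bar x * hinv
      linear_combination (-(O α)) * h2 - (rt * bar x) * hOc
    have hxy : (rt - O α) * (bar x * y) = 0 := by
      linear_combination bar x * hy
    have h5 : bar x * m * y = O (E m) * (bar x * y) := by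
      have h6 := hmul_ann m (bar x * y) hxy
      linear_combination h6
    have h7 : (rt - O α) * (O (E m) * (bar x * y)) = 0 := by
      linear_combination O (E m) * hxy
    rw [h5, htr_ann _ h7, map_mul, map_mul, hEof, hEbar]
    ring
  -- the two linear maps
  set Eₗ : A →ₗ[ℂ] ℂ :=
    { toFun := E, map_add' := fun a b => map_add E a b,
      map_smul' := fun c x => by simp only [RingHom.id_apply, smul_eq_mul]; exact hElin c x }
    with hEₗdef
  set f₁ : (Fin n → ℂ) →ₗ[ℂ] (Fin n → A) :=
    LinearMap.pi (fun k => (LinearMap.toSpanSingleton ℂ A e).comp (LinearMap.proj k))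
    with hf₁def
  set f₂ : (Fin n → A) →ₗ[ℂ] (Fin n → ℂ) :=
    LinearMap.pi (fun k => Eₗ.comp (LinearMap.proj k)) with hf₂def
  have hf₁app : ∀ (c : Fin n → ℂ) (k : Fin n), f₁ c k = c k • e := fun c k => rfl
  have hf₂app : ∀ (v : Fin n → A) (k : Fin n), f₂ v k = E (v k) := fun v k => rfl
  set W : Set (Fin n → A) :=
    {v | ∀ k, (AdjoinRoot.root (p.map ρ) - AdjoinRoot.of (p.map ρ) α) * v k = 0} with hWdef
  have hWmem : ∀ v, v ∈ W ↔ ∀ k, (rt - O α) * v k = 0 := fun v => Iff.rfl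
  set τ₁ : (Fin n → ℂ) → (Fin n → ℂ) → ℂ := fun v w => ∑ i, ∑ j,
      (starRingEnd ℂ) (v i) * (AdjoinRoot.lift ρ α hα) (θ i j) * w j with hτ₁def
  set τ₂ : (Fin n → A) → (Fin n → A) → ℂ := fun v w => ∑ k, ∑ l,
      Algebra.trace ℂ A (bar (v k) * φ (θ k l) * w l) with hτ₂def
  -- the isometry property
  have hform : ∀ v ∈ W, ∀ w ∈ W, τ₁ (f₂ v) (f₂ w) = τ₂ v w := by
    intro v hv w hw
    rw [hτ₁def, hτ₂def]
    refine Finset.sum_congr rfl fun k _ => Finset.sum_congr rfl fun l _ => ?_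
    rw [hkey _ _ _ (hv k) (hw l), hEφ, hf₂app, hf₂app]
  have hf₁W : ∀ c : Fin n → ℂ, f₁ c ∈ W := by
    intro c k
    rw [hf₁app, mul_smul_comm, heann, smul_zero]
  have hf₂f₁ : ∀ c, f₂ (f₁ c) = c := by
    intro c
    funext k
    rw [hf₂app, hf₁app, hElin, hEe, mul_one]
  have hf₁0 : ∀ c : Fin n → ℂ, f₁ c = 0 → c = 0 := by
    intro c h
    have := hf₂f₁ c
    rw [h, map_zero] at this
    exact this.symm
  have hf₂0 : ∀ v ∈ W, f₂ v = 0 → v = 0 := by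
    intro v hv h
    funext k
    have h1 : E (v k) = 0 := by
      have := congrFun h k
      rwa [hf₂app] at this
    rw [hann_eq _ (hv k), h1, zero_smul]
    rfl
  have hform' : ∀ (c : Fin n → ℂ), ∀ (c' : Fin n → ℂ), τ₂ (f₁ c) (f₁ c') = τ₁ c c' := by
    intro c c'
    rw [← hform _ (hf₁W c) _ (hf₁W c'), hf₂f₁, hf₂f₁]
  -- conclude
  have hpos : posIdxOn (Fin n → ℂ) Set.univ τ₁ = posIdxOn (Fin n → A) W τ₂ := by
    unfold Stmt4.posIdxOn
    congr 1
    refine Set.Subset.antisymm ?_ ?_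
    · exact Stmt4Aux.idx_subset Set.univ W τ₁ τ₂ (fun r => 0 < r) f₁
        (fun v _ => hf₁W v) (fun v _ => hf₁0 v) (fun v _ w _ => hform' v w)
    · exact Stmt4Aux.idx_subset W Set.univ τ₂ τ₁ (fun r => 0 < r) f₂
        (fun v _ => Set.mem_univ _) hf₂0 hform
  have hneg : negIdxOn (Fin n → ℂ) Set.univ τ₁ = negIdxOn (Fin n → A) W τ₂ := by
    unfold Stmt4.negIdxOn
    congr 1
    refine Set.Subset.antisymm ?_ ?_
    · exact Stmt4Aux.idx_subset Set.univ W τ₁ τ₂ (fun r => r < 0) f₁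
        (fun v _ => hf₁W v) (fun v _ => hf₁0 v) (fun v _ w _ => hform' v w)
    · exact Stmt4Aux.idx_subset W Set.univ τ₂ τ₁ (fun r => r < 0) f₂
        (fun v _ => Set.mem_univ _) hf₂0 hform
  show signOn (Fin n → ℂ) Set.univ τ₁ = signOn (Fin n → A) W τ₂
  rw [Stmt4.signOn, Stmt4.signOn, hpos, hneg]
end

section
/- Let f be an isometry of a nonsingular (−ε)-symmetric form (V, θ) over a field F with involution such that 1 − f is invertible. Then the F(t)-valued sesquilinear form on V ⊗_F F(t) defined by (v, w) ↦ (1 − t⁻¹)·θ((1 − f)⁻¹v, w) + ε(1 − t)·conj(θ((1 − f)⁻¹w, v)) is a nonsingular ε-hermitian form over F(t), where F(t) carries the involution extending that of F with t̄ = t⁻¹. -/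
set_option synthInstance.maxHeartbeats 1000000
set_option maxHeartbeats 1000000

/-- Let `f` be an isometry of a nonsingular `(-ε)`-symmetric form `(V, θ)` over
a field `F` with involution `J`, such that `1 - f` is invertible (with inverse
`g`).  Then the `F(t)`-valued sesquilinear form on `V ⊗_F F(t)` defined on `V`
by `(v, w) ↦ (1 - t⁻¹)·θ((1 - f)⁻¹v, w) + ε(1 - t)·conj(θ((1 - f)⁻¹w, v))` is a
nonsingular `ε`-hermitian form over `F(t)`, where `F(t)` carries the involution
`JR` extending `J` with `t̄ = t⁻¹`: it satisfies `Θ(v,w) = ε·JR(Θ(w,v))`, and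
its Gram matrix with respect to any basis of `V` is invertible. -/
theorem statement12 (F : Type*) [Field F]
    (J : F →+* F) (hJ : ∀ x, J (J x) = x)
    (ε : F) (hε : ε = 1 ∨ ε = -1)
    (JR : RatFunc F →+* RatFunc F)
    (hJRC : ∀ a : F, JR (RatFunc.C a) = RatFunc.C (J a))
    (hJRX : JR RatFunc.X = (RatFunc.X)⁻¹)
    (V : Type*) [AddCommGroup V] [Module F V] [FiniteDimensional F V]
    (θ : V → V → F)
    (hadd₁ : ∀ a a' b, θ (a + a') b = θ a b + θ a' b)
    (hadd₂ : ∀ a b b', θ a (b + b') = θ a b + θ a b')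
    (hsmul₁ : ∀ (c : F) a b, θ (c • a) b = J c * θ a b)
    (hsmul₂ : ∀ (c : F) a b, θ a (c • b) = θ a b * c)
    -- θ is (-ε)-symmetric
    (hsym : ∀ a b, θ a b = (-ε) * J (θ b a))
    -- θ is nonsingular
    (hnd₁ : ∀ v : V, v ≠ 0 → ∃ w, θ v w ≠ 0)
    (hnd₂ : ∀ w : V, w ≠ 0 → ∃ v, θ v w ≠ 0)
    -- f is an isometry with 1 - f invertible, with inverse g
    (f : V →ₗ[F] V) (hf : Function.Bijective f)
    (hisom : ∀ a b, θ (f a) (f b) = θ a b)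
    (hf1 : Function.Bijective ((LinearMap.id : V →ₗ[F] V) - f))
    (g : V →ₗ[F] V) (hg : ∀ v, g v - f (g v) = v) (hg' : ∀ v, g (v - f v) = v)
    -- the induced form over F(t)
    (Θ : V → V → RatFunc F)
    (hΘ : ∀ v w, Θ v w =
      (1 - (RatFunc.X)⁻¹) * RatFunc.C (θ (g v) w)
        + RatFunc.C ε * ((1 - RatFunc.X) * RatFunc.C (J (θ (g w) v)))) :
    -- Θ is ε-hermitian and nonsingular over F(t)
    (∀ v w, Θ v w = RatFunc.C ε * JR (Θ w v)) ∧
    (∀ (n : ℕ) (b : Module.Basis (Fin n) F V),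
      (Matrix.of fun i j => Θ (b i) (b j)).det ≠ 0) := by
  classical
  have hJε : J ε = ε := by rcases hε with h | h <;> simp [h]
  have hε2 : ε * ε = 1 := by rcases hε with h | h <;> simp [h]
  -- additive homs in each slot
  have Lhom : ∀ b : V, ∃ φ : V →+ F, ∀ a, φ a = θ a b := fun b =>
    ⟨AddMonoidHom.mk' (fun a => θ a b) (fun a a' => hadd₁ a a' b), fun _ => rfl⟩
  have Rhom : ∀ a : V, ∃ φ : V →+ F, ∀ b, φ b = θ a b := fun a =>
    ⟨AddMonoidHom.mk' (fun b => θ a b) (fun b b' => hadd₂ a b b'), fun _ => rfl⟩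
  have hsub₁ : ∀ a a' b, θ (a - a') b = θ a b - θ a' b := by
    intro a a' b
    obtain ⟨φ, hφ⟩ := Lhom b
    rw [← hφ, ← hφ, ← hφ, map_sub]
  have hsub₂ : ∀ a b b', θ a (b - b') = θ a b - θ a b' := by
    intro a b b'
    obtain ⟨φ, hφ⟩ := Rhom a
    rw [← hφ, ← hφ, ← hφ, map_sub]
  -- key identities
  have key₁ : ∀ v w, θ (g v) w + θ v (g w) = θ v w := by
    intro v w
    have hv : v = g v - f (g v) := (hg v).symm
    have hw : w = g w - f (g w) := (hg w).symm
    set a := g v with ha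
    set b := g w with hb
    have h1 : θ a w = θ a b - θ a (f b) := by
      conv_lhs => rw [hw]
      exact hsub₂ a b (f b)
    have h2 : θ v b = θ a b - θ (f a) b := by
      conv_lhs => rw [hv]
      exact hsub₁ a (f a) b
    have h3 : θ v w = θ a b - θ a (f b) - (θ (f a) b - θ a b) := by
      conv_lhs => rw [hv, hw]
      rw [hsub₁, hsub₂, hsub₂, hisom]
    rw [h1, h2, h3]; ring
  have key₂ : ∀ v w, ε * J (θ (g w) v) = - θ v (g w) := by
    intro v w
    have h := congrArg J (hsym (g w) v)
    rw [map_mul, map_neg, hJε, hJ] at h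
    rw [h, ← mul_assoc, mul_neg, hε2]; ring
  constructor
  · -- hermitian
    intro v w
    rw [hΘ v w, hΘ w v]
    simp only [map_add, map_mul, map_sub, map_one, map_inv₀, hJRX, inv_inv, hJRC, hJ, hJε]
    have h1 : RatFunc.C ε * RatFunc.C ε = 1 := by
      rw [← map_mul, hε2, map_one]
    linear_combination (((RatFunc.X : RatFunc F)⁻¹ - 1) * RatFunc.C (θ (g v) w)) * h1
  · -- nonsingularity
    intro n b
    set Mθ : Matrix (Fin n) (Fin n) F := Matrix.of fun i j => θ (b i) (b j) with hMθ
    set M₀ : Matrix (Fin n) (Fin n) F := Matrix.of fun i j => θ (g (b i)) (b j) with hM₀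
    set M₁ : Matrix (Fin n) (Fin n) F := Matrix.of fun i j => θ (b i) (g (b j)) with hM₁
    -- Step A : det Mθ ≠ 0
    have hdetMθ : Mθ.det ≠ 0 := by
      intro hdet
      obtain ⟨c, hc, hc0⟩ := Matrix.exists_vecMul_eq_zero_iff.mpr hdet
      set v : V := ∑ i, J (c i) • b i with hv
      have hvne : v ≠ 0 := by
        intro h0
        apply hc
        funext i
        have hrep : b.repr v i = J (c i) := by
          rw [hv, map_sum]
          simp [Finsupp.single_apply]
        have hrep0 : J (c i) = 0 := by rw [← hrep, h0]; simp
        have hcc := congrArg J hrep0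
        rw [hJ, map_zero] at hcc
        simpa using hcc
      obtain ⟨w, hw⟩ := hnd₁ v hvne
      apply hw
      have hθvb : ∀ u : V, θ v u = ∑ i, c i * θ (b i) u := by
        intro u
        obtain ⟨φ, hφ⟩ := Lhom u
        rw [hv, ← hφ, map_sum]
        refine Finset.sum_congr rfl fun i _ => ?_
        rw [hφ, hsmul₁, hJ]
      have hwrep : w = ∑ j, b.repr w j • b j := (b.sum_repr w).symm
      calc θ v w = ∑ j, θ v (b.repr w j • b j) := by
            obtain ⟨φ, hφ⟩ := Rhom v
            conv_lhs => rw [hwrep]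
            rw [← hφ, map_sum]
            exact Finset.sum_congr rfl fun j _ => (hφ _)
        _ = ∑ j, (∑ i, c i * θ (b i) (b j)) * b.repr w j := by
            refine Finset.sum_congr rfl fun j _ => ?_
            rw [hsmul₂, hθvb]
        _ = 0 := by
            refine Finset.sum_eq_zero fun j _ => ?_
            have hz : Matrix.vecMul c Mθ j = 0 := by rw [hc0]; rfl
            rw [Matrix.vecMul, dotProduct] at hz
            simp only [hMθ, Matrix.of_apply] at hz ⊢
            rw [hz, zero_mul]
    -- Step B : the polynomial matrix
    set Pmat : Matrix (Fin n) (Fin n) (Polynomial F) :=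
      Matrix.of fun i j => Polynomial.C (M₀ i j) + Polynomial.X * Polynomial.C (M₁ i j)
      with hPmat
    have heval : Pmat.map (Polynomial.evalRingHom (1 : F)) = Mθ := by
      ext i j
      simp only [Matrix.map_apply, hPmat, Matrix.of_apply, map_add, map_mul,
        Polynomial.coe_evalRingHom, Polynomial.eval_C, Polynomial.eval_X, one_mul,
        Polynomial.eval_add, Polynomial.eval_mul]
      simpa [hM₀, hM₁, hMθ] using key₁ (b i) (b j)
    have hPdet : Pmat.det ≠ 0 := by
      intro h0
      apply hdetMθ
      have h := (Polynomial.evalRingHom (1 : F)).map_det Pmat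
      rw [RingHom.mapMatrix_apply, heval, h0, map_zero] at h
      exact h.symm
    -- Step C : relate the Gram matrix of Θ to Pmat
    have hX : (RatFunc.X : RatFunc F) ≠ 0 := RatFunc.X_ne_zero
    set s : RatFunc F := (1 - RatFunc.X) * (-(RatFunc.X)⁻¹) with hs
    have hΘmat : (Matrix.of fun i j => Θ (b i) (b j))
        = s • Pmat.map (algebraMap (Polynomial F) (RatFunc F)) := by
      ext i j
      have hΘij : Θ (b i) (b j)
          = (1 - (RatFunc.X)⁻¹) * RatFunc.C (M₀ i j)
            - (1 - RatFunc.X) * RatFunc.C (M₁ i j) := by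
        rw [hΘ]
        have h2 : RatFunc.C ε * RatFunc.C (J (θ (g (b j)) (b i)))
            = - RatFunc.C (M₁ i j) := by
          rw [← map_mul, key₂, map_neg]
          rfl
        have h3 : RatFunc.C ε * ((1 - RatFunc.X) * RatFunc.C (J (θ (g (b j)) (b i))))
            = (1 - RatFunc.X) * (RatFunc.C ε * RatFunc.C (J (θ (g (b j)) (b i)))) := by ring
        rw [h3, h2]
        simp only [hM₀, Matrix.of_apply]
        ring
      rw [Matrix.smul_apply, Matrix.map_apply, Matrix.of_apply, hΘij, hPmat, Matrix.of_apply,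
        map_add, map_mul, RatFunc.algebraMap_C, RatFunc.algebraMap_C,
        RatFunc.algebraMap_X, hs]
      field_simp
      linear_combination (-(RatFunc.X * RatFunc.C (M₀ i j) - RatFunc.X * RatFunc.C (M₁ i j) + RatFunc.X ^ 2 * RatFunc.C (M₁ i j) - RatFunc.C (M₀ i j))) * mul_inv_cancel₀ hX
    have hsne : s ≠ 0 := by
      have hX1 : (RatFunc.X : RatFunc F) ≠ 1 := by
        intro h
        have hX1' : (Polynomial.X : Polynomial F) = 1 := by
          apply RatFunc.algebraMap_injective F
          rw [RatFunc.algebraMap_X, map_one, h]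
        simpa using Polynomial.X_ne_C (1 : F) (by simpa using hX1')
      rw [hs]
      exact mul_ne_zero (sub_ne_zero.mpr (fun h => hX1 h.symm))
        (neg_ne_zero.mpr (inv_ne_zero hX))
    rw [hΘmat, Matrix.det_smul]
    apply mul_ne_zero
    · exact pow_ne_zero _ hsne
    · rw [← RingHom.mapMatrix_apply, ← RingHom.map_det]
      intro h0
      apply hPdet
      exact RatFunc.algebraMap_injective F (by rw [h0, map_zero])
end
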